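/- Let μ be a probability measure on ℝ^d with ∫‖z‖² dμ(z) < ∞, let t > 0, and let φ_t be the density of N(0, tI_d). Define D(x) = ∫ φ_t(x−z) dμ(z) and m_t(x) = (∫ z φ_t(x−z) dμ(z)) / D(x). Then there exists a finite constant C_t (depending on t and μ) such that ‖m_t(x)‖ ≤ C_t (1 + ‖x‖) for all x ∈ ℝ^d. -/

import Mathlib

open MeasureTheory

/-- The density of the Gaussian distribution `N(0, t I_d)` on `ℝ^d`. -/
noncomputable def gaussDensity (d : ℕ) (t : ℝ) (u : EuclideanSpace ℝ (Fin d)) : ℝ :=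
  (2 * Real.pi * t) ^ (-(d : ℝ) / 2) * Real.exp (-‖u‖ ^ 2 / (2 * t))

open scoped ENNReal

lemma aux_exp (t s : ℝ) (ht : 0 < t) (hs : 0 ≤ s) :
    s * Real.exp (-s ^ 2 / (4 * t)) ≤ 2 * Real.sqrt t := by
  set x := s ^ 2 / (4 * t) with hxdef
  have hx0 : 0 ≤ x := by positivity
  have h1 : x ≤ Real.exp x := by linarith [Real.add_one_le_exp x]
  have h2 : s ^ 2 ≤ 4 * t * Real.exp x := by
    have hs2 : s ^ 2 = 4 * t * x := by
      rw [hxdef, mul_div_assoc', mul_div_cancel_left₀ _ (by positivity : (4 * t) ≠ 0)]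
    nlinarith
  have hsq : (2 * Real.sqrt t * Real.exp (x / 2)) ^ 2 = 4 * t * Real.exp x := by
    have he : Real.exp (x / 2) ^ 2 = Real.exp x := by
      rw [sq, ← Real.exp_add]; ring_nf
    rw [mul_pow, mul_pow, Real.sq_sqrt ht.le, he]; ring
  have h3 : s ≤ 2 * Real.sqrt t * Real.exp (x / 2) := by
    have hR0 : 0 < 2 * Real.sqrt t * Real.exp (x / 2) := by positivity
    nlinarith [hR0, h2, hsq, hs]
  have hx' : -s ^ 2 / (4 * t) = -x := by rw [hxdef]; ring
  rw [hx']
  calc s * Real.exp (-x) ≤ 2 * Real.sqrt t * Real.exp (x / 2) * Real.exp (-x) := by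
        exact mul_le_mul_of_nonneg_right h3 (Real.exp_pos _).le
    _ = 2 * Real.sqrt t * Real.exp (-(x / 2)) := by
        rw [mul_assoc, ← Real.exp_add]; ring_nf
    _ ≤ 2 * Real.sqrt t * 1 := by
        refine mul_le_mul_of_nonneg_left ?_ (by positivity)
        exact Real.exp_le_one_iff.mpr (by linarith)
    _ = 2 * Real.sqrt t := mul_one _

lemma exists_half_ball (d : ℕ) (μ : Measure (EuclideanSpace ℝ (Fin d)))
    [IsProbabilityMeasure μ] :
    ∃ K : ℝ, 0 ≤ K ∧ (1:ℝ)/2 ≤ (μ (Metric.closedBall 0 K)).toReal := by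
  have hU : ⋃ n : ℕ, Metric.closedBall (0 : EuclideanSpace ℝ (Fin d)) n = Set.univ := by
    ext z
    simp only [Set.mem_iUnion, Metric.mem_closedBall, Set.mem_univ, iff_true]
    obtain ⟨n, hn⟩ := exists_nat_ge (dist z 0)
    exact ⟨n, hn⟩
  have hmono : Monotone (fun n : ℕ => Metric.closedBall (0 : EuclideanSpace ℝ (Fin d)) n) := by
    intro a b hab
    exact Metric.closedBall_subset_closedBall (by exact_mod_cast hab)
  have h := MeasureTheory.tendsto_measure_iUnion_atTop (μ := μ) hmono
  rw [hU, measure_univ] at h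
  obtain ⟨n, hn⟩ := (h.eventually_const_lt (show (1:ℝ≥0∞)/2 < 1 by norm_num)).exists
  refine ⟨n, Nat.cast_nonneg n, ?_⟩
  have h1 : ((1:ℝ≥0∞)/2).toReal ≤ (μ (Metric.closedBall 0 (n:ℝ))).toReal :=
    ENNReal.toReal_mono (measure_ne_top μ _) hn.le
  simpa using h1

set_option maxHeartbeats 1000000 in
/-- linear growth of the posterior mean: for a probability measure `μ`
on `ℝ^d` with finite second moment and `t > 0`, the posterior mean
`m_t(x) = (∫ z φ_t(x−z) dμ(z)) / D(x)` with `D(x) = ∫ φ_t(x−z) dμ(z)` satisfies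
`‖m_t(x)‖ ≤ C_t (1 + ‖x‖)` for some finite constant `C_t`. -/
theorem stmt5 (d : ℕ) (μ : Measure (EuclideanSpace ℝ (Fin d))) [IsProbabilityMeasure μ]
    (hmom : Integrable (fun z => ‖z‖ ^ 2) μ) (t : ℝ) (ht : 0 < t)
    (D : EuclideanSpace ℝ (Fin d) → ℝ)
    (hD : D = fun x => ∫ z, gaussDensity d t (x - z) ∂μ)
    (mt : EuclideanSpace ℝ (Fin d) → EuclideanSpace ℝ (Fin d))
    (hmt : mt = fun x => (D x)⁻¹ • ∫ z, gaussDensity d t (x - z) • z ∂μ) :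
    ∃ Ct : ℝ, ∀ x, ‖mt x‖ ≤ Ct * (1 + ‖x‖) := by
  obtain ⟨K, hK0, hK⟩ := exists_half_ball d μ
  set c : ℝ := (2 * Real.pi * t) ^ (-(d : ℝ) / 2) with hc
  have hc0 : 0 < c := Real.rpow_pos_of_pos (by positivity) _
  have hφpos : ∀ u : EuclideanSpace ℝ (Fin d), 0 < gaussDensity d t u := by
    intro u; unfold gaussDensity; positivity
  have hφle : ∀ u : EuclideanSpace ℝ (Fin d), gaussDensity d t u ≤ c := by
    intro u
    unfold gaussDensity
    rw [← hc]
    calc c * Real.exp (-‖u‖ ^ 2 / (2 * t)) ≤ c * 1 := by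
          refine mul_le_mul_of_nonneg_left ?_ hc0.le
          refine Real.exp_le_one_iff.mpr ?_
          rw [neg_div]
          exact neg_nonpos.mpr (by positivity)
      _ = c := mul_one _
  have hφcont : Continuous (gaussDensity d t) := by
    unfold gaussDensity; fun_prop
  have hfc : ∀ x : EuclideanSpace ℝ (Fin d),
      Continuous (fun z : EuclideanSpace ℝ (Fin d) => gaussDensity d t (x - z)) :=
    fun x => hφcont.comp (continuous_const.sub continuous_id)
  have hnormint : Integrable (fun z : EuclideanSpace ℝ (Fin d) => ‖z‖) μ := by
    refine ((integrable_const (1:ℝ)).add hmom).mono' continuous_norm.aestronglyMeasurable ?_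
    filter_upwards with z
    have h0 := norm_nonneg z
    rw [Real.norm_eq_abs, abs_of_nonneg h0]
    simp only [Pi.add_apply]
    nlinarith [sq_nonneg (‖z‖ - 1)]
  have Iφ : ∀ x, Integrable (fun z => gaussDensity d t (x - z)) μ := by
    intro x
    refine (integrable_const c).mono' (hfc x).aestronglyMeasurable ?_
    filter_upwards with z
    rw [Real.norm_eq_abs, abs_of_pos (hφpos _)]
    exact hφle _
  have Iφz : ∀ x, Integrable (fun z => gaussDensity d t (x - z) • z) μ := by
    intro x
    refine (hnormint.const_mul c).mono' (((hfc x).smul continuous_id).aestronglyMeasurable) ?_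
    filter_upwards with z
    rw [norm_smul, Real.norm_eq_abs, abs_of_pos (hφpos _)]
    exact mul_le_mul_of_nonneg_right (hφle _) (norm_nonneg z)
  have Iφn : ∀ x, Integrable (fun z => gaussDensity d t (x - z) * ‖z‖) μ := by
    intro x
    refine (Iφz x).norm.congr ?_
    filter_upwards with z
    rw [norm_smul, Real.norm_eq_abs, abs_of_pos (hφpos _)]
  have hlow : ∀ x, c / 2 * Real.exp (-(‖x‖ + K) ^ 2 / (2 * t)) ≤ D x := by
    intro x
    set m : ℝ := c * Real.exp (-(‖x‖ + K) ^ 2 / (2 * t)) with hm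
    have hm0 : 0 ≤ m := by positivity
    have hind : ∀ z, (Metric.closedBall (0:EuclideanSpace ℝ (Fin d)) K).indicator
        (fun _ => m) z ≤ gaussDensity d t (x - z) := by
      intro z
      by_cases hz : z ∈ Metric.closedBall (0:EuclideanSpace ℝ (Fin d)) K
      · rw [Set.indicator_of_mem hz]
        have hz' : ‖z‖ ≤ K := by simpa [dist_eq_norm] using Metric.mem_closedBall.mp hz
        have h1 : ‖x - z‖ ^ 2 ≤ (‖x‖ + K) ^ 2 := by
          have h2 := norm_sub_le x z
          nlinarith [norm_nonneg (x - z), norm_nonneg x]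
        unfold gaussDensity
        rw [hm, ← hc]
        refine mul_le_mul_of_nonneg_left (Real.exp_le_exp.mpr ?_) hc0.le
        rw [div_le_div_iff₀ (by positivity) (by positivity)]
        nlinarith
      · rw [Set.indicator_of_notMem hz]; exact (hφpos _).le
    have hle : (μ (Metric.closedBall (0:EuclideanSpace ℝ (Fin d)) K)).toReal * m ≤ D x := by
      simp only [hD]
      have hint : Integrable
          ((Metric.closedBall (0:EuclideanSpace ℝ (Fin d)) K).indicator (fun _ => m)) μ :=
        (integrable_const m).indicator measurableSet_closedBall
      have h2 := integral_mono hint (Iφ x) hind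
      rwa [integral_indicator_const m measurableSet_closedBall,
        smul_eq_mul] at h2
    calc c / 2 * Real.exp (-(‖x‖ + K) ^ 2 / (2 * t)) = 1 / 2 * m := by rw [hm]; ring
      _ ≤ (μ (Metric.closedBall (0:EuclideanSpace ℝ (Fin d)) K)).toReal * m :=
          mul_le_mul_of_nonneg_right hK hm0
      _ ≤ D x := hle
  have hDpos : ∀ x, 0 < D x := fun x => lt_of_lt_of_le (by positivity) (hlow x)
  have hnum : ∀ x, ‖∫ z, gaussDensity d t (x - z) • z ∂μ‖
      ≤ (3 * ‖x‖ + 2 * K + 4 * Real.sqrt t) * D x := by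
    intro x
    set r : ℝ := 2 * (‖x‖ + K) with hr
    have hr0 : 0 ≤ r := by positivity
    set A : ℝ := 2 * c * Real.sqrt t * Real.exp (-r ^ 2 / (4 * t)) with hA
    have hA0 : 0 ≤ A := by positivity
    have hpt : ∀ z, gaussDensity d t (x - z) * ‖z‖
        ≤ (‖x‖ + r) * gaussDensity d t (x - z) + A := by
      intro z
      have hz : ‖z‖ ≤ ‖x‖ + ‖x - z‖ := by
        have h2 := norm_sub_le x (x - z)
        simpa using h2
      have key : gaussDensity d t (x - z) * ‖x - z‖ ≤ r * gaussDensity d t (x - z) + A := by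
        rcases le_or_gt ‖x - z‖ r with h | h
        · have h3 : gaussDensity d t (x - z) * ‖x - z‖ ≤ r * gaussDensity d t (x - z) := by
            rw [mul_comm]
            exact mul_le_mul_of_nonneg_right h (hφpos _).le
          linarith
        · have h2 : gaussDensity d t (x - z) * ‖x - z‖ ≤ A := by
            unfold gaussDensity
            rw [← hc, hA]
            have hsplit : Real.exp (-‖x - z‖ ^ 2 / (2 * t))
                = Real.exp (-‖x - z‖ ^ 2 / (4 * t)) * Real.exp (-‖x - z‖ ^ 2 / (4 * t)) := by
              rw [← Real.exp_add]; ring_nf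
            rw [hsplit]
            have b1 : ‖x - z‖ * Real.exp (-‖x - z‖ ^ 2 / (4 * t)) ≤ 2 * Real.sqrt t :=
              aux_exp t _ ht (norm_nonneg _)
            have b2 : Real.exp (-‖x - z‖ ^ 2 / (4 * t)) ≤ Real.exp (-r ^ 2 / (4 * t)) := by
              refine Real.exp_le_exp.mpr ?_
              have h4 : r ^ 2 ≤ ‖x - z‖ ^ 2 := by nlinarith
              rw [div_le_div_iff₀ (by positivity) (by positivity)]
              nlinarith [mul_nonneg (sub_nonneg.mpr h4) ht.le]
            calc c * (Real.exp (-‖x - z‖ ^ 2 / (4 * t)) * Real.exp (-‖x - z‖ ^ 2 / (4 * t)))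
                  * ‖x - z‖
                = c * ((‖x - z‖ * Real.exp (-‖x - z‖ ^ 2 / (4 * t)))
                  * Real.exp (-‖x - z‖ ^ 2 / (4 * t))) := by ring
              _ ≤ c * ((2 * Real.sqrt t) * Real.exp (-r ^ 2 / (4 * t))) := by
                  refine mul_le_mul_of_nonneg_left ?_ hc0.le
                  exact mul_le_mul b1 b2 (Real.exp_pos _).le (by positivity)
              _ = 2 * c * Real.sqrt t * Real.exp (-r ^ 2 / (4 * t)) := by ring
          nlinarith [mul_nonneg hr0 (hφpos (x - z)).le]
      calc gaussDensity d t (x - z) * ‖z‖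
          ≤ gaussDensity d t (x - z) * (‖x‖ + ‖x - z‖) :=
            mul_le_mul_of_nonneg_left hz (hφpos _).le
        _ = ‖x‖ * gaussDensity d t (x - z) + gaussDensity d t (x - z) * ‖x - z‖ := by ring
        _ ≤ ‖x‖ * gaussDensity d t (x - z) + (r * gaussDensity d t (x - z) + A) := by linarith
        _ = (‖x‖ + r) * gaussDensity d t (x - z) + A := by ring
    have step1 : ‖∫ z, gaussDensity d t (x - z) • z ∂μ‖
        ≤ ∫ z, gaussDensity d t (x - z) * ‖z‖ ∂μ := by
      refine (norm_integral_le_integral_norm _).trans_eq ?_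
      refine integral_congr_ae ?_
      filter_upwards with z
      rw [norm_smul, Real.norm_eq_abs, abs_of_pos (hφpos _)]
    have step2 : ∫ z, gaussDensity d t (x - z) * ‖z‖ ∂μ ≤ (‖x‖ + r) * D x + A := by
      have hInt2 : Integrable (fun z => (‖x‖ + r) * gaussDensity d t (x - z) + A) μ :=
        ((Iφ x).const_mul _).add (integrable_const _)
      have h2 := integral_mono (Iφn x) hInt2 hpt
      rw [integral_add ((Iφ x).const_mul _) (integrable_const _), integral_const_mul,
        integral_const, probReal_univ, smul_eq_mul, one_mul] at h2
      simpa only [hD] using h2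
    have step3 : A ≤ 4 * Real.sqrt t * D x := by
      have e1 : Real.exp (-r ^ 2 / (4 * t)) ≤ Real.exp (-(‖x‖ + K) ^ 2 / (2 * t)) := by
        refine Real.exp_le_exp.mpr ?_
        rw [hr, div_le_div_iff₀ (by positivity) (by positivity)]
        nlinarith [mul_nonneg (sq_nonneg (‖x‖ + K)) ht.le]
      calc A = 2 * Real.sqrt t * (c * Real.exp (-r ^ 2 / (4 * t))) := by rw [hA]; ring
        _ ≤ 2 * Real.sqrt t * (c * Real.exp (-(‖x‖ + K) ^ 2 / (2 * t))) :=
            mul_le_mul_of_nonneg_left (mul_le_mul_of_nonneg_left e1 hc0.le) (by positivity)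
        _ = 2 * Real.sqrt t * 2 * (c / 2 * Real.exp (-(‖x‖ + K) ^ 2 / (2 * t))) := by ring
        _ ≤ 2 * Real.sqrt t * 2 * D x :=
            mul_le_mul_of_nonneg_left (hlow x) (by positivity)
        _ = 4 * Real.sqrt t * D x := by ring
    calc ‖∫ z, gaussDensity d t (x - z) • z ∂μ‖ ≤ (‖x‖ + r) * D x + A := step1.trans step2
      _ ≤ (‖x‖ + r) * D x + 4 * Real.sqrt t * D x := by linarith
      _ = (3 * ‖x‖ + 2 * K + 4 * Real.sqrt t) * D x := by rw [hr]; ring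
  refine ⟨3 + 2 * K + 4 * Real.sqrt t, fun x => ?_⟩
  have hDx := hDpos x
  rw [hmt]
  simp only
  rw [norm_smul, Real.norm_eq_abs, abs_of_pos (inv_pos.mpr hDx)]
  calc (D x)⁻¹ * ‖∫ z, gaussDensity d t (x - z) • z ∂μ‖
      ≤ (D x)⁻¹ * ((3 * ‖x‖ + 2 * K + 4 * Real.sqrt t) * D x) :=
        mul_le_mul_of_nonneg_left (hnum x) (inv_pos.mpr hDx).le
    _ = 3 * ‖x‖ + 2 * K + 4 * Real.sqrt t := by field_simp
    _ ≤ (3 + 2 * K + 4 * Real.sqrt t) * (1 + ‖x‖) := by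
        nlinarith [norm_nonneg x, Real.sqrt_nonneg t]
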